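/- Let K be a field and let P be a polyomino that contains a zig-zag walk. Then the polyomino ideal I_P is not a prime ideal of S_P. -/

import Mathlib

open MvPolynomial

namespace PolyoStmt

/-- A cell of `ℤ²`, identified with its lower-left corner. -/
abbrev Cell : Type := ℤ × ℤ

/-- The four vertices of a cell. -/
def cellVertices (c : Cell) : Set (ℤ × ℤ) :=
  {c, (c.1 + 1, c.2), (c.1, c.2 + 1), (c.1 + 1, c.2 + 1)}

/-- The vertex set of a collection of cells. -/
def vertexSet (P : Finset Cell) : Set (ℤ × ℤ) := ⋃ c ∈ P, cellVertices c

/-- Two cells share a common edge. -/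
def SharesEdge (a b : Cell) : Prop :=
  (a.1 = b.1 ∧ (b.2 = a.2 + 1 ∨ a.2 = b.2 + 1)) ∨
  (a.2 = b.2 ∧ (b.1 = a.1 + 1 ∨ a.1 = b.1 + 1))

/-- Two cells share at least one vertex (equivalently, the closed unit squares meet). -/
def SharesVertex (a b : Cell) : Prop := (cellVertices a ∩ cellVertices b).Nonempty

/-- Any two members of `S` are joined by a path inside `S` whose consecutive
members are related by `r`. -/
def ConnectedVia (S : Set Cell) (r : Cell → Cell → Prop) : Prop :=
  ∀ a ∈ S, ∀ b ∈ S,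
    Relation.ReflTransGen (fun x y => x ∈ S ∧ y ∈ S ∧ r x y) a b

/-- A polyomino: a nonempty, edge-connected finite collection of cells. -/
def IsPolyomino (P : Finset Cell) : Prop :=
  P.Nonempty ∧ ConnectedVia (↑P) SharesEdge

/-- A collection of cells is simple if its complement is edge-connected (no holes). -/
def IsSimple (P : Finset Cell) : Prop :=
  ConnectedVia ((↑P : Set Cell)ᶜ) SharesEdge

/-- A collection of cells is weakly connected if it is connected through shared vertices. -/
def IsWeaklyConnected (P : Finset Cell) : Prop :=
  ConnectedVia (↑P) SharesVertex

def IsRowConvex (P : Finset Cell) : Prop :=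
  ∀ c ∈ P, ∀ d ∈ P, c.2 = d.2 → ∀ x : ℤ, c.1 ≤ x → x ≤ d.1 → (x, c.2) ∈ P

def IsColumnConvex (P : Finset Cell) : Prop :=
  ∀ c ∈ P, ∀ d ∈ P, c.1 = d.1 → ∀ y : ℤ, c.2 ≤ y → y ≤ d.2 → (c.1, y) ∈ P

def IsConvex (P : Finset Cell) : Prop := IsRowConvex P ∧ IsColumnConvex P

/-- `P` is thin: it contains no square tetromino. -/
def IsThin (P : Finset Cell) : Prop :=
  ¬ ∃ c : Cell, c ∈ P ∧ (c.1 + 1, c.2) ∈ P ∧ (c.1, c.2 + 1) ∈ P ∧ (c.1 + 1, c.2 + 1) ∈ P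

/-- The cell with lower-left corner `c` is contained in the interval `[a, b]`. -/
def CellInBox (a b c : Cell) : Prop := a ≤ c ∧ c.1 + 1 ≤ b.1 ∧ c.2 + 1 ≤ b.2

/-- `[a, b]` is an inner interval of `P`: it is proper and all cells inside it belong to `P`. -/
def IsInnerInterval (P : Finset Cell) (a b : Cell) : Prop :=
  a.1 < b.1 ∧ a.2 < b.2 ∧ ∀ c : Cell, CellInBox a b c → c ∈ P

/-- The cells of the rectangle determined by the interval `[a, b]`. -/
noncomputable def rectCells (a b : Cell) : Finset Cell :=
  (Finset.Icc a b).filter fun c => c.1 + 1 ≤ b.1 ∧ c.2 + 1 ≤ b.2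

/-- The type indexing the variables of `S_P`: the vertices of `P`. -/
abbrev Vtx (P : Finset Cell) : Type := {v : ℤ × ℤ // v ∈ vertexSet P}

/-- The polynomial ring `S_P = K[x_v : v ∈ V(P)]`. -/
abbrev polyRing (K : Type) [Field K] (P : Finset Cell) : Type :=
  MvPolynomial (Vtx P) K

/-- The polyomino ideal (ideal of inner 2-minors) of `P`. -/
noncomputable def polyoIdeal (K : Type) [Field K] (P : Finset Cell) :
    Ideal (polyRing K P) :=
  Ideal.span { f | ∃ (a b : ℤ × ℤ) (ha : a ∈ vertexSet P) (hb : b ∈ vertexSet P)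
      (hc : ((a.1, b.2) : ℤ × ℤ) ∈ vertexSet P)
      (hd : ((b.1, a.2) : ℤ × ℤ) ∈ vertexSet P),
      IsInnerInterval P a b ∧
      f = X ⟨a, ha⟩ * X ⟨b, hb⟩ - X ⟨(a.1, b.2), hc⟩ * X ⟨(b.1, a.2), hd⟩ }

/-- The coordinate ring `K[P] = S_P / I_P`. -/
abbrev coordRing (K : Type) [Field K] (P : Finset Cell) : Type :=
  polyRing K P ⧸ polyoIdeal K P

/-- The degree-`k` graded component of `K[P]` (the image of the homogeneous
polynomials of degree `k`). -/
noncomputable def gradedPiece (K : Type) [Field K] (P : Finset Cell) (k : ℕ) :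
    Submodule K (coordRing K P) :=
  (MvPolynomial.homogeneousSubmodule (Vtx P) K k).map
    (Ideal.Quotient.mkₐ K (polyoIdeal K P)).toLinearMap

/-- The Hilbert–Poincaré series of `K[P]`, as a formal power series over `ℤ`. -/
noncomputable def hilbertSeries (K : Type) [Field K] (P : Finset Cell) : PowerSeries ℤ :=
  PowerSeries.mk fun k => (Module.finrank K (gradedPiece K P k) : ℤ)

/-- Cells `A` and `B` of `P` are attacking. -/
def Attacking (P : Finset Cell) (A B : Cell) : Prop :=
  A ≠ B ∧
  ((A.2 = B.2 ∧ ∀ x : ℤ, min A.1 B.1 ≤ x → x ≤ max A.1 B.1 → (x, A.2) ∈ P) ∨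
   (A.1 = B.1 ∧ ∀ y : ℤ, min A.2 B.2 ≤ y → y ≤ max A.2 B.2 → (A.1, y) ∈ P))

/-- The set of `k`-rook configurations of `P`. -/
def RookConfigs (P : Finset Cell) (k : ℕ) : Set (Finset Cell) :=
  {F | ↑F ⊆ (↑P : Set Cell) ∧ F.card = k ∧
    (↑F : Set Cell).Pairwise fun A B => ¬ Attacking P A B}

/-- The number of `k`-rook configurations of `P`. -/
noncomputable def rookNum (P : Finset Cell) (k : ℕ) : ℕ := Set.ncard (RookConfigs P k)

/-- The rook polynomial of `P`, regarded as a formal power series over `ℤ`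
(all coefficients beyond the rook number vanish). -/
noncomputable def rookSeries (P : Finset Cell) : PowerSeries ℤ :=
  PowerSeries.mk fun k => (rookNum P k : ℤ)

/-- One switch move between rook configurations of `P`. -/
def SwitchStep (P : Finset Cell) (F F' : Finset Cell) : Prop :=
  ∃ a b : Cell, IsInnerInterval P a b ∧
    ((a ∈ F ∧ (b.1 - 1, b.2 - 1) ∈ F ∧
        F' = (F \ {a, (b.1 - 1, b.2 - 1)}) ∪ {(a.1, b.2 - 1), (b.1 - 1, a.2)}) ∨
     ((a.1, b.2 - 1) ∈ F ∧ (b.1 - 1, a.2) ∈ F ∧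
        F' = (F \ {(a.1, b.2 - 1), (b.1 - 1, a.2)}) ∪ {a, (b.1 - 1, b.2 - 1)}))

/-- Equivalence of `k`-rook configurations up to switches. -/
def switchSetoid (P : Finset Cell) (k : ℕ) : Setoid (RookConfigs P k) :=
  ⟨fun F F' => Relation.EqvGen (SwitchStep P) F.1 F'.1,
   fun _ => Relation.EqvGen.refl _,
   fun h => Relation.EqvGen.symm _ _ h,
   fun h h' => Relation.EqvGen.trans _ _ _ h h'⟩

/-- The number of equivalence classes of `k`-rook configurations up to switches. -/
noncomputable def switchRookNum (P : Finset Cell) (k : ℕ) : ℕ :=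
  Nat.card (Quotient (switchSetoid P k))

/-- The switching rook polynomial of `P`, regarded as a formal power series over `ℤ`. -/
noncomputable def switchRookSeries (P : Finset Cell) : PowerSeries ℤ :=
  PowerSeries.mk fun k => (switchRookNum P k : ℤ)

/-- The unit horizontal segment from `(x, y)` to `(x + 1, y)` is an edge of a cell of `P`. -/
def HorizEdge (P : Finset Cell) (x y : ℤ) : Prop := (x, y) ∈ P ∨ (x, y - 1) ∈ P

/-- The unit vertical segment from `(x, y)` to `(x, y + 1)` is an edge of a cell of `P`. -/
def VertEdge (P : Finset Cell) (x y : ℤ) : Prop := (x, y) ∈ P ∨ (x - 1, y) ∈ P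

/-- `p` and `q` lie on a common horizontal or vertical edge interval of `P`. -/
def OnCommonEdgeInterval (P : Finset Cell) (p q : ℤ × ℤ) : Prop :=
  (p.2 = q.2 ∧ ∀ x : ℤ, min p.1 q.1 ≤ x → x < max p.1 q.1 → HorizEdge P x p.2) ∨
  (p.1 = q.1 ∧ ∀ y : ℤ, min p.2 q.2 ≤ y → y < max p.2 q.2 → VertEdge P p.1 y)

/-- A zig-zag walk of `P`, consisting of `n + 2` distinct inner intervals
`I_i = [lo i, hi i]` with distinguished corners `v i`, `z i`, `u i`. -/
structure ZigZagWalk (P : Finset Cell) where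
  n : ℕ
  lo : ZMod (n + 2) → ℤ × ℤ
  hi : ZMod (n + 2) → ℤ × ℤ
  v : ZMod (n + 2) → ℤ × ℤ
  z : ZMod (n + 2) → ℤ × ℤ
  u : ZMod (n + 2) → ℤ × ℤ
  inner : ∀ i, IsInnerInterval P (lo i) (hi i)
  distinct : ∀ i j, lo i = lo j → hi i = hi j → i = j
  corners : ∀ i,
    (({v i, z i} : Set (ℤ × ℤ)) = {lo i, hi i} ∧
      ({u i, v (i + 1)} : Set (ℤ × ℤ)) = {((lo i).1, (hi i).2), ((hi i).1, (lo i).2)}) ∨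
    (({v i, z i} : Set (ℤ × ℤ)) = {((lo i).1, (hi i).2), ((hi i).1, (lo i).2)} ∧
      ({u i, v (i + 1)} : Set (ℤ × ℤ)) = {lo i, hi i})
  inter : ∀ i,
    Set.Icc (lo i) (hi i) ∩ Set.Icc (lo (i + 1)) (hi (i + 1)) = {v (i + 1)}
  edgeInt : ∀ i, OnCommonEdgeInterval P (v i) (v (i + 1))
  noCommon : ∀ i j, i ≠ j → ∀ a b : ℤ × ℤ, IsInnerInterval P a b →
    ¬ (z i ∈ Set.Icc a b ∧ z j ∈ Set.Icc a b)
  hv : ∀ i, v i ∈ vertexSet P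
  hz : ∀ i, z i ∈ vertexSet P
  hu : ∀ i, u i ∈ vertexSet P

/-- `P` admits a zig-zag walk. -/
def HasZigZagWalk (P : Finset Cell) : Prop := Nonempty (ZigZagWalk P)

/-- The binomial `f_W` attached to a zig-zag walk `W`. -/
noncomputable def zigZagBinomial (K : Type) [Field K] {P : Finset Cell}
    (W : ZigZagWalk P) : polyRing K P :=
  (∏ i : ZMod (W.n + 2), X ⟨W.z i, W.hz i⟩) - ∏ i : ZMod (W.n + 2), X ⟨W.u i, W.hu i⟩

/-- A closed path polyomino. -/
def IsClosedPath (P : Finset Cell) : Prop :=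
  IsPolyomino P ∧
  ∃ (n : ℕ) (A : ZMod (n + 6) → Cell),
    Function.Injective A ∧
    (∀ i, A i ∈ P) ∧ (∀ c ∈ P, ∃ i, A i = c) ∧
    (∀ i, SharesEdge (A i) (A (i + 1))) ∧
    (∀ i j : ZMod (n + 6),
      j ∉ ({i - 2, i - 1, i, i + 1, i + 2} : Set (ZMod (n + 6))) →
      ¬ SharesVertex (A i) (A j))

/-- A grid polyomino. -/
def IsGridPolyomino (P : Finset Cell) : Prop :=
  IsPolyomino P ∧
  ∃ (m n : ℤ) (r s : ℕ) (hr : 0 < r) (hs : 0 < s)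
    (x x' : Fin r → ℤ) (y y' : Fin s → ℤ),
    (∀ i, x i < x' i) ∧ (∀ j, y j < y' j) ∧
    1 < x ⟨0, hr⟩ ∧ x' ⟨r - 1, Nat.sub_lt hr one_pos⟩ < m ∧
    1 < y ⟨0, hs⟩ ∧ y' ⟨s - 1, Nat.sub_lt hs one_pos⟩ < n ∧
    (∀ i : Fin r, ∀ h : i.1 + 1 < r, x ⟨i.1 + 1, h⟩ = x' i + 1) ∧
    (∀ j : Fin s, ∀ h : j.1 + 1 < s, y ⟨j.1 + 1, h⟩ = y' j + 1) ∧
    P = rectCells (1, 1) (m, n) \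
      Finset.univ.biUnion (fun i : Fin r =>
        Finset.univ.biUnion fun j : Fin s => rectCells (x i, y j) (x' i, y' j))

/-- A maximal horizontal edge interval of `P`. -/
structure MaxHorizInterval (P : Finset Cell) where
  row : ℤ
  left : ℤ
  right : ℤ
  le : left ≤ right
  edges : ∀ x : ℤ, left ≤ x → x < right → HorizEdge P x row
  notLeft : ¬ HorizEdge P (left - 1) row
  notRight : ¬ HorizEdge P right row

/-- Membership of a lattice point in a maximal horizontal edge interval. -/
def MaxHorizInterval.mem {P : Finset Cell} (H : MaxHorizInterval P) (p : ℤ × ℤ) : Prop :=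
  p.2 = H.row ∧ H.left ≤ p.1 ∧ p.1 ≤ H.right

/-- A maximal vertical edge interval of `P`. -/
structure MaxVertInterval (P : Finset Cell) where
  col : ℤ
  bot : ℤ
  top : ℤ
  le : bot ≤ top
  edges : ∀ y : ℤ, bot ≤ y → y < top → VertEdge P col y
  notBot : ¬ VertEdge P col (bot - 1)
  notTop : ¬ VertEdge P col top

/-- Membership of a lattice point in a maximal vertical edge interval. -/
def MaxVertInterval.mem {P : Finset Cell} (V : MaxVertInterval P) (p : ℤ × ℤ) : Prop :=
  p.1 = V.col ∧ V.bot ≤ p.2 ∧ p.2 ≤ V.top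

/-- The homomorphism `Φ_P : S_P → K[v₁, …, v_m, h₁, …, h_n]` sending `x_a` to
`v_i h_j`, where `V_i` (given by `Vmap`) and `H_j` (given by `Hmap`) are the maximal
vertical and horizontal edge intervals through `a`. -/
noncomputable def PhiMap (K : Type) [Field K] (P : Finset Cell)
    (Vmap : Vtx P → MaxVertInterval P) (Hmap : Vtx P → MaxHorizInterval P) :
    polyRing K P →ₐ[K] MvPolynomial (MaxVertInterval P ⊕ MaxHorizInterval P) K :=
  aeval fun a => X (Sum.inl (Vmap a)) * X (Sum.inr (Hmap a))

/-- The monomial `y_u y_w` attached to an edge `{u, w}` of a graph. -/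
noncomputable def edgeMonomial (K : Type) [Field K] {VG : Type} (e : Sym2 VG) :
    MvPolynomial VG K :=
  Sym2.lift ⟨fun u w => X u * X w, fun u w => mul_comm _ _⟩ e

/-- A parallelogram polyomino. -/
def IsParallelogram (P : Finset Cell) : Prop :=
  IsPolyomino P ∧ IsConvex P ∧
  ∃ a b : Cell, (∀ c ∈ P, a ≤ c ∧ c ≤ b) ∧ a ∈ P ∧ b ∈ P

/-- A frame polyomino: the complement of a parallelogram polyomino inside a rectangle,
the parallelogram sharing no vertex with the boundary of the rectangle. -/
def IsFrame (P : Finset Cell) : Prop :=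
  IsPolyomino P ∧
  ∃ (a b : Cell) (Q : Finset Cell), a.1 < b.1 ∧ a.2 < b.2 ∧
    IsParallelogram Q ∧ Q ⊆ rectCells a b ∧
    (∀ c ∈ Q, a.1 < c.1 ∧ c.1 + 1 < b.1 ∧ a.2 < c.2 ∧ c.2 + 1 < b.2) ∧
    P = rectCells a b \ Q


section ZZAux

variable {P : Finset Cell}

lemma pairset_cases {α : Type*} {s t a b : α} (h : ({s, t} : Set α) = {a, b}) (hab : a ≠ b) :
    (s = a ∧ t = b) ∨ (s = b ∧ t = a) := by
  have hs : s ∈ ({a, b} : Set α) := by rw [← h]; exact Set.mem_insert _ _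
  have ha : a ∈ ({s, t} : Set α) := by rw [h]; exact Set.mem_insert _ _
  have hb : b ∈ ({s, t} : Set α) := by rw [h]; exact Set.mem_insert_of_mem _ rfl
  simp only [Set.mem_insert_iff, Set.mem_singleton_iff] at hs ha hb
  rcases hs with h1 | h1
  · refine Or.inl ⟨h1, ?_⟩
    rcases hb with h' | h'
    · exact absurd (h'.trans h1) (Ne.symm hab)
    · exact h'.symm
  · refine Or.inr ⟨h1, ?_⟩
    rcases ha with h' | h'
    · exact absurd (h'.trans h1) hab
    · exact h'.symm

lemma pair_mem {α : Type*} {pr : α → Prop} {s t a b : α}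
    (h : ({s, t} : Set α) = {a, b}) (hs : pr s) (ht : pr t) : pr a ∧ pr b := by
  have ha : a ∈ ({s, t} : Set α) := by rw [h]; exact Set.mem_insert _ _
  have hb : b ∈ ({s, t} : Set α) := by rw [h]; exact Set.mem_insert_of_mem _ rfl
  simp only [Set.mem_insert_iff, Set.mem_singleton_iff] at ha hb
  constructor
  · rcases ha with h' | h' <;> rw [h'] <;> assumption
  · rcases hb with h' | h' <;> rw [h'] <;> assumption

lemma lo_le_hi (W : ZigZagWalk P) (i : ZMod (W.n + 2)) : W.lo i ≤ W.hi i :=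
  Prod.le_def.mpr ⟨le_of_lt (W.inner i).1, le_of_lt (W.inner i).2.1⟩

lemma z_mem_Icc (W : ZigZagWalk P) (i : ZMod (W.n + 2)) :
    W.z i ∈ Set.Icc (W.lo i) (W.hi i) := by
  have hlh := lo_le_hi W i
  have h1 : (W.lo i).1 ≤ (W.hi i).1 := (Prod.le_def.mp hlh).1
  have h2 : (W.lo i).2 ≤ (W.hi i).2 := (Prod.le_def.mp hlh).2
  rcases W.corners i with ⟨hc, _⟩ | ⟨hc, _⟩
  · have hz : W.z i ∈ ({W.lo i, W.hi i} : Set (ℤ × ℤ)) := by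
      rw [← hc]; exact Set.mem_insert_of_mem _ rfl
    simp only [Set.mem_insert_iff, Set.mem_singleton_iff] at hz
    rcases hz with h | h <;> rw [h]
    · exact Set.left_mem_Icc.mpr hlh
    · exact Set.right_mem_Icc.mpr hlh
  · have hz : W.z i ∈ ({((W.lo i).1, (W.hi i).2), ((W.hi i).1, (W.lo i).2)} : Set (ℤ × ℤ)) := by
      rw [← hc]; exact Set.mem_insert_of_mem _ rfl
    simp only [Set.mem_insert_iff, Set.mem_singleton_iff] at hz
    rcases hz with h | h <;> rw [h]
    · exact Set.mem_Icc.mpr ⟨Prod.le_def.mpr ⟨le_refl _, h2⟩, Prod.le_def.mpr ⟨h1, le_refl _⟩⟩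
    · exact Set.mem_Icc.mpr ⟨Prod.le_def.mpr ⟨h1, le_refl _⟩, Prod.le_def.mpr ⟨le_refl _, h2⟩⟩

lemma u_mem_Icc (W : ZigZagWalk P) (i : ZMod (W.n + 2)) :
    W.u i ∈ Set.Icc (W.lo i) (W.hi i) := by
  have hlh := lo_le_hi W i
  have h1 : (W.lo i).1 ≤ (W.hi i).1 := (Prod.le_def.mp hlh).1
  have h2 : (W.lo i).2 ≤ (W.hi i).2 := (Prod.le_def.mp hlh).2
  rcases W.corners i with ⟨_, hc⟩ | ⟨_, hc⟩
  · have hu : W.u i ∈ ({((W.lo i).1, (W.hi i).2), ((W.hi i).1, (W.lo i).2)} : Set (ℤ × ℤ)) := by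
      rw [← hc]; exact Set.mem_insert _ _
    simp only [Set.mem_insert_iff, Set.mem_singleton_iff] at hu
    rcases hu with h | h <;> rw [h]
    · exact Set.mem_Icc.mpr ⟨Prod.le_def.mpr ⟨le_refl _, h2⟩, Prod.le_def.mpr ⟨h1, le_refl _⟩⟩
    · exact Set.mem_Icc.mpr ⟨Prod.le_def.mpr ⟨h1, le_refl _⟩, Prod.le_def.mpr ⟨le_refl _, h2⟩⟩
  · have hu : W.u i ∈ ({W.lo i, W.hi i} : Set (ℤ × ℤ)) := by
      rw [← hc]; exact Set.mem_insert _ _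
    simp only [Set.mem_insert_iff, Set.mem_singleton_iff] at hu
    rcases hu with h | h <;> rw [h]
    · exact Set.left_mem_Icc.mpr hlh
    · exact Set.right_mem_Icc.mpr hlh

lemma z_ne_z (W : ZigZagWalk P) {i j : ZMod (W.n + 2)} (hij : i ≠ j) : W.z i ≠ W.z j := by
  intro h
  exact W.noCommon i j hij (W.lo i) (W.hi i) (W.inner i)
    ⟨z_mem_Icc W i, by rw [← h]; exact z_mem_Icc W i⟩

lemma u_ne_z (W : ZigZagWalk P) (i j : ZMod (W.n + 2)) : W.u i ≠ W.z j := by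
  by_cases hij : i = j
  · subst hij
    have hx := (W.inner i).1
    have hy := (W.inner i).2.1
    intro heq
    rcases W.corners i with ⟨h1, h2⟩ | ⟨h1, h2⟩
    · have hu : W.u i ∈ ({((W.lo i).1, (W.hi i).2), ((W.hi i).1, (W.lo i).2)} : Set (ℤ × ℤ)) := by
        rw [← h2]; exact Set.mem_insert _ _
      have hz : W.z i ∈ ({W.lo i, W.hi i} : Set (ℤ × ℤ)) := by
        rw [← h1]; exact Set.mem_insert_of_mem _ rfl
      simp only [Set.mem_insert_iff, Set.mem_singleton_iff] at hu hz
      rcases hu with h | h <;> rcases hz with h' | h' <;>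
        · rw [h, h'] at heq
          simp only [Prod.ext_iff] at heq
          omega
    · have hu : W.u i ∈ ({W.lo i, W.hi i} : Set (ℤ × ℤ)) := by
        rw [← h2]; exact Set.mem_insert _ _
      have hz : W.z i ∈ ({((W.lo i).1, (W.hi i).2), ((W.hi i).1, (W.lo i).2)} : Set (ℤ × ℤ)) := by
        rw [← h1]; exact Set.mem_insert_of_mem _ rfl
      simp only [Set.mem_insert_iff, Set.mem_singleton_iff] at hu hz
      rcases hu with h | h <;> rcases hz with h' | h' <;>
        · rw [h, h'] at heq
          simp only [Prod.ext_iff] at heq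
          omega
  · intro heq
    exact W.noCommon j i (fun h => hij h.symm) (W.lo i) (W.hi i) (W.inner i)
      ⟨by rw [← heq]; exact u_mem_Icc W i, z_mem_Icc W i⟩

/-- The exponent vector of the monomial `∏ x_{z_i}`. -/
noncomputable def zmu (W : ZigZagWalk P) : Vtx P →₀ ℕ :=
  ∑ i : ZMod (W.n + 2), Finsupp.single ⟨W.z i, W.hz i⟩ 1

lemma zmu_eq_zero (W : ZigZagWalk P) {q : Vtx P} (h : ∀ i, W.z i ≠ q.1) : zmu W q = 0 := by
  rw [zmu, Finsupp.finset_sum_apply]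
  exact Finset.sum_eq_zero fun i _ =>
    Finsupp.single_eq_of_ne' (fun he => h i (congrArg Subtype.val he))

lemma exists_of_mem_support (W : ZigZagWalk P) {q : Vtx P} (h : q ∈ (zmu W).support) :
    ∃ i, W.z i = q.1 := by
  by_contra hc
  push_neg at hc
  exact (Finsupp.mem_support_iff.mp h) (zmu_eq_zero W hc)

lemma prod_X_eq {ι σ R : Type*} [DecidableEq ι] [CommSemiring R] (s : Finset ι) (t : ι → σ) :
    (∏ i ∈ s, (X (t i) : MvPolynomial σ R)) =
      monomial (∑ i ∈ s, Finsupp.single (t i) 1) 1 := by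
  induction s using Finset.induction with
  | empty => simp
  | insert _ _ h ih =>
      rw [Finset.prod_insert h, Finset.sum_insert h, ih, monomial_single_add, pow_one]

lemma coeff_zmu_mul_XX (K : Type) [Field K] (W : ZigZagWalk P) (r : polyRing K P)
    {p q : Vtx P} (h : p ∉ (zmu W).support ∨ q ∉ (zmu W).support) :
    coeff (zmu W) (r * (X p * X q)) = 0 := by
  rcases h with h | h
  · rw [mul_comm (X p) (X q), ← mul_assoc, coeff_mul_X', if_neg h]
  · rw [← mul_assoc, coeff_mul_X', if_neg h]

lemma coeff_zmu_ideal (K : Type) [Field K] (W : ZigZagWalk P) {f : polyRing K P}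
    (hf : f ∈ polyoIdeal K P) : coeff (zmu W) f = 0 := by
  suffices h : ∀ r : polyRing K P, coeff (zmu W) (r * f) = 0 by simpa using h 1
  rw [polyoIdeal] at hf
  induction hf using Submodule.span_induction with
  | mem x hx =>
      obtain ⟨a, b, ha, hb, hc, hd, hin, rfl⟩ := hx
      have hab_le : a ≤ b := Prod.le_def.mpr ⟨hin.1.le, hin.2.1.le⟩
      intro r
      rw [mul_sub, coeff_sub]
      have h1 : coeff (zmu W) (r * (X (⟨a, ha⟩ : Vtx P) * X ⟨b, hb⟩)) = 0 := by
        refine coeff_zmu_mul_XX K W r ?_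
        by_contra hcon
        push_neg at hcon
        obtain ⟨i, hi0⟩ := exists_of_mem_support W hcon.1
        obtain ⟨j, hj0⟩ := exists_of_mem_support W hcon.2
        have hi : W.z i = a := hi0
        have hj : W.z j = b := hj0
        have hijne : i ≠ j := by
          intro h'
          rw [h', hj] at hi
          exact absurd (congrArg Prod.fst hi.symm) (ne_of_lt hin.1)
        refine W.noCommon i j hijne a b hin ⟨?_, ?_⟩
        · rw [hi]; exact Set.mem_Icc.mpr ⟨le_refl _, hab_le⟩
        · rw [hj]; exact Set.mem_Icc.mpr ⟨hab_le, le_refl _⟩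
      have h2 : coeff (zmu W)
          (r * (X (⟨(a.1, b.2), hc⟩ : Vtx P) * X ⟨(b.1, a.2), hd⟩)) = 0 := by
        refine coeff_zmu_mul_XX K W r ?_
        by_contra hcon
        push_neg at hcon
        obtain ⟨i, hi0⟩ := exists_of_mem_support W hcon.1
        obtain ⟨j, hj0⟩ := exists_of_mem_support W hcon.2
        have hi : W.z i = (a.1, b.2) := hi0
        have hj : W.z j = (b.1, a.2) := hj0
        have hijne : i ≠ j := by
          intro h'
          rw [h', hj] at hi
          have h2 := congrArg Prod.fst hi
          simp only [Prod.fst] at h2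
          exact absurd h2.symm (ne_of_lt hin.1)
        refine W.noCommon i j hijne a b hin ⟨?_, ?_⟩
        · rw [hi]
          exact Set.mem_Icc.mpr ⟨Prod.le_def.mpr ⟨le_refl _, hin.2.1.le⟩,
            Prod.le_def.mpr ⟨hin.1.le, le_refl _⟩⟩
        · rw [hj]
          exact Set.mem_Icc.mpr ⟨Prod.le_def.mpr ⟨hin.1.le, le_refl _⟩,
            Prod.le_def.mpr ⟨le_refl _, hin.2.1.le⟩⟩
      rw [h1, h2, sub_zero]
  | zero => intro r; simp
  | add x y _ _ hx hy => intro r; rw [mul_add, coeff_add, hx, hy, add_zero]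
  | smul a x _ hx => intro r; rw [smul_eq_mul, ← mul_assoc]; exact hx _

lemma X_mul_eq (K : Type) [Field K] {p q a b : ℤ × ℤ}
    (hp : p ∈ vertexSet P) (hq : q ∈ vertexSet P)
    (ha : a ∈ vertexSet P) (hb : b ∈ vertexSet P)
    (h : ({p, q} : Set (ℤ × ℤ)) = {a, b}) (hab : a ≠ b) :
    (X ⟨p, hp⟩ : polyRing K P) * X ⟨q, hq⟩ = X ⟨a, ha⟩ * X ⟨b, hb⟩ := by
  rcases pairset_cases h hab with ⟨h1, h2⟩ | ⟨h1, h2⟩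
  · rw [show (⟨p, hp⟩ : Vtx P) = ⟨a, ha⟩ from Subtype.ext h1,
      show (⟨q, hq⟩ : Vtx P) = ⟨b, hb⟩ from Subtype.ext h2]
  · rw [show (⟨p, hp⟩ : Vtx P) = ⟨b, hb⟩ from Subtype.ext h1,
      show (⟨q, hq⟩ : Vtx P) = ⟨a, ha⟩ from Subtype.ext h2, mul_comm]

lemma step_mem (K : Type) [Field K] (W : ZigZagWalk P) (i : ZMod (W.n + 2)) :
    (X ⟨W.v i, W.hv i⟩ * X ⟨W.z i, W.hz i⟩ : polyRing K P)
      - X ⟨W.u i, W.hu i⟩ * X ⟨W.v (i + 1), W.hv (i + 1)⟩ ∈ polyoIdeal K P := by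
  have hin := W.inner i
  have hne1 : W.lo i ≠ W.hi i := fun h => (ne_of_lt hin.1) (congrArg Prod.fst h)
  have hne2 : (((W.lo i).1, (W.hi i).2) : ℤ × ℤ) ≠ ((W.hi i).1, (W.lo i).2) := by
    intro h
    simp only [Prod.mk.injEq] at h
    exact (ne_of_lt hin.1) h.1
  rcases W.corners i with ⟨h1, h2⟩ | ⟨h1, h2⟩
  · obtain ⟨hlo, hhi⟩ := pair_mem h1 (W.hv i) (W.hz i)
    obtain ⟨hc, hd⟩ := pair_mem h2 (W.hu i) (W.hv (i + 1))
    rw [X_mul_eq K (W.hv i) (W.hz i) hlo hhi h1 hne1,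
      X_mul_eq K (W.hu i) (W.hv (i + 1)) hc hd h2 hne2]
    exact Ideal.subset_span ⟨W.lo i, W.hi i, hlo, hhi, hc, hd, hin, rfl⟩
  · obtain ⟨hc, hd⟩ := pair_mem h1 (W.hv i) (W.hz i)
    obtain ⟨hlo, hhi⟩ := pair_mem h2 (W.hu i) (W.hv (i + 1))
    rw [X_mul_eq K (W.hv i) (W.hz i) hc hd h1 hne2,
      X_mul_eq K (W.hu i) (W.hv (i + 1)) hlo hhi h2 hne1]
    have hmem : (X ⟨W.lo i, hlo⟩ * X ⟨W.hi i, hhi⟩ : polyRing K P)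
        - X ⟨((W.lo i).1, (W.hi i).2), hc⟩ * X ⟨((W.hi i).1, (W.lo i).2), hd⟩
        ∈ polyoIdeal K P :=
      Ideal.subset_span ⟨W.lo i, W.hi i, hlo, hhi, hc, hd, hin, rfl⟩
    have := neg_mem hmem
    rwa [neg_sub] at this

end ZZAux

theorem stmt8 (K : Type) [Field K] (P : Finset Cell) (hP : IsPolyomino P)
    (hw : HasZigZagWalk P) :
    ¬ (polyoIdeal K P).IsPrime := by
  intro hpr
  obtain ⟨W⟩ := hw
  set f : polyRing K P := ∏ i : ZMod (W.n + 2), X ⟨W.v i, W.hv i⟩ with hf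
  set g : polyRing K P :=
    (∏ i : ZMod (W.n + 2), X ⟨W.z i, W.hz i⟩) -
      ∏ i : ZMod (W.n + 2), X ⟨W.u i, W.hu i⟩ with hg
  -- f * g ∈ I_P
  have h1 : f * (∏ i : ZMod (W.n + 2), (X ⟨W.z i, W.hz i⟩ : polyRing K P)) =
      ∏ i : ZMod (W.n + 2), (X ⟨W.v i, W.hv i⟩ * X ⟨W.z i, W.hz i⟩ : polyRing K P) :=
    (Finset.prod_mul_distrib).symm
  have hf' : f = ∏ i : ZMod (W.n + 2), (X ⟨W.v (i + 1), W.hv (i + 1)⟩ : polyRing K P) :=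
    (Fintype.prod_equiv (Equiv.addRight (1 : ZMod (W.n + 2)))
      (fun i => (X ⟨W.v (i + 1), W.hv (i + 1)⟩ : polyRing K P))
      (fun i => X ⟨W.v i, W.hv i⟩) (fun i => rfl)).symm
  have h2 : f * (∏ i : ZMod (W.n + 2), (X ⟨W.u i, W.hu i⟩ : polyRing K P)) =
      ∏ i : ZMod (W.n + 2),
        (X ⟨W.u i, W.hu i⟩ * X ⟨W.v (i + 1), W.hv (i + 1)⟩ : polyRing K P) := by
    rw [hf', mul_comm, ← Finset.prod_mul_distrib]
  have hfg : f * g =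
      (∏ i : ZMod (W.n + 2), (X ⟨W.v i, W.hv i⟩ * X ⟨W.z i, W.hz i⟩ : polyRing K P)) -
        ∏ i : ZMod (W.n + 2),
          (X ⟨W.u i, W.hu i⟩ * X ⟨W.v (i + 1), W.hv (i + 1)⟩ : polyRing K P) := by
    rw [hg, mul_sub, h1, h2]
  have hmem : f * g ∈ polyoIdeal K P := by
    rw [hfg]
    refine Ideal.Quotient.eq.mp ?_
    rw [map_prod, map_prod]
    exact Finset.prod_congr rfl fun i _ => Ideal.Quotient.eq.mpr (step_mem K W i)
  -- f ∉ I_P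
  have hfI : f ∉ polyoIdeal K P := by
    intro h
    have hker : polyoIdeal K P ≤
        RingHom.ker ((aeval fun _ : Vtx P => (1 : K)) : polyRing K P →ₐ[K] K).toRingHom := by
      rw [polyoIdeal]
      refine Ideal.span_le.mpr ?_
      rintro x ⟨a, b, ha, hb, hc, hd, hin, rfl⟩
      simp [RingHom.mem_ker]
    have := hker h
    simp [RingHom.mem_ker, hf, map_prod] at this
  -- g ∉ I_P
  have hgI : g ∉ polyoIdeal K P := by
    intro h
    have hc := coeff_zmu_ideal K W h
    have e1 : (∏ i : ZMod (W.n + 2), (X (⟨W.z i, W.hz i⟩ : Vtx P) : polyRing K P)) =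
        monomial (zmu W) 1 := prod_X_eq _ _
    have e2 : (∏ i : ZMod (W.n + 2), (X (⟨W.u i, W.hu i⟩ : Vtx P) : polyRing K P)) =
        monomial (∑ i : ZMod (W.n + 2), Finsupp.single (⟨W.u i, W.hu i⟩ : Vtx P) 1) 1 :=
      prod_X_eq _ _
    have hne : (∑ i : ZMod (W.n + 2), Finsupp.single (⟨W.u i, W.hu i⟩ : Vtx P) 1) ≠ zmu W := by
      intro heq
      have h0 := DFunLike.congr_fun heq (⟨W.z 0, W.hz 0⟩ : Vtx P)
      have hL : (∑ i : ZMod (W.n + 2), Finsupp.single (⟨W.u i, W.hu i⟩ : Vtx P) 1)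
          (⟨W.z 0, W.hz 0⟩ : Vtx P) = 0 := by
        rw [Finsupp.finset_sum_apply]
        exact Finset.sum_eq_zero fun j _ =>
          Finsupp.single_eq_of_ne' (fun he => u_ne_z W j 0 (congrArg Subtype.val he))
      have hR : zmu W (⟨W.z 0, W.hz 0⟩ : Vtx P) ≠ 0 := by
        rw [zmu, Finsupp.finset_sum_apply]
        intro h0'
        have := Finset.sum_eq_zero_iff.mp h0' 0 (Finset.mem_univ _)
        simp [Finsupp.single_apply] at this
      exact hR (h0.symm.trans hL)
    rw [hg, coeff_sub, e1, e2, coeff_monomial, coeff_monomial, if_pos rfl, if_neg hne,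
      sub_zero] at hc
    exact one_ne_zero hc
  rcases hpr.mem_or_mem hmem with h | h
  · exact hfI h
  · exact hgI h

end PolyoStmt
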